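/- In a countably additive Popper space, each ∼-equivalence class of conditioning events is closed under countable unions: if V₁, V₂, … all lie in the same ∼-class [V], then ⋃ᵢ Vᵢ ∈ [V]. -/

import Mathlib

/-- A countably additive Popper space over `(W, F)`: `F` is a σ-algebra of subsets of `W`,
`F'` ⊆ `F` does not contain `∅`, is closed under supersets in `F`, satisfies the regularity
condition that `μ(V | U) ≠ 0` with `U ∈ F'` implies `V ∩ U ∈ F'`, and `μ` satisfies CP1–CP3
and is countably additive in its first argument. -/
structure Popper {W : Type*} (F F' : Set (Set W)) (μ : Set W → Set W → ℝ) : Prop where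
  univ_mem : Set.univ ∈ F
  compl_mem : ∀ ⦃U⦄, U ∈ F → Uᶜ ∈ F
  iUnion_mem : ∀ s : ℕ → Set W, (∀ n, s n ∈ F) → (⋃ n, s n) ∈ F
  subset : F' ⊆ F
  empty_not_mem : (∅ : Set W) ∉ F'
  superset_closed : ∀ ⦃U V⦄, U ∈ F' → U ⊆ V → V ∈ F → V ∈ F'
  cond_closed : ∀ ⦃U V⦄, U ∈ F' → V ∈ F → μ V U ≠ 0 → V ∩ U ∈ F'
  nonneg : ∀ V ∈ F, ∀ U ∈ F', 0 ≤ μ V U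
  le_one : ∀ V ∈ F, ∀ U ∈ F', μ V U ≤ 1
  cp1 : ∀ U ∈ F', μ U U = 1
  cp2 : ∀ V₁ ∈ F, ∀ V₂ ∈ F, ∀ U ∈ F', Disjoint V₁ V₂ → μ (V₁ ∪ V₂) U = μ V₁ U + μ V₂ U
  cp3 : ∀ V ∈ F, ∀ X ∈ F', ∀ U ∈ F', V ⊆ X → X ⊆ U → μ V U = μ V X * μ X U
  countably_additive : ∀ V : ℕ → Set W, (∀ n, V n ∈ F) → Pairwise (Function.onFun Disjoint V) →
    ∀ U ∈ F', HasSum (fun n => μ (V n) U) (μ (⋃ n, V n) U)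

/-- The relation `U ≤ V` defined by `μ(U | U ∪ V) > 0`. -/
def leRel {W : Type*} (μ : Set W → Set W → ℝ) (U V : Set W) : Prop :=
  0 < μ U (U ∪ V)

/-- `U ∼ V` iff `U ≤ V` and `V ≤ U`. -/
def simRel {W : Type*} (μ : Set W → Set W → ℝ) (U V : Set W) : Prop :=
  leRel μ U V ∧ leRel μ V U

section Helpers
variable {W : Type*} {F F' : Set (Set W)} {μ : Set W → Set W → ℝ}

lemma Popper.union_mem (h : Popper F F' μ) {A B : Set W} (hA : A ∈ F) (hB : B ∈ F) :
    A ∪ B ∈ F := by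
  have : A ∪ B = ⋃ n : ℕ, (if n = 0 then A else B) := by
    ext x
    simp only [Set.mem_union, Set.mem_iUnion]
    constructor
    · rintro (hx | hx)
      exacts [⟨0, by simp [hx]⟩, ⟨1, by simp [hx]⟩]
    · rintro ⟨n, hn⟩
      split at hn
      exacts [Or.inl hn, Or.inr hn]
  rw [this]
  exact h.iUnion_mem _ (fun n => by split <;> assumption)

lemma Popper.inter_mem (h : Popper F F' μ) {A B : Set W} (hA : A ∈ F) (hB : B ∈ F) :
    A ∩ B ∈ F := by
  have : A ∩ B = (Aᶜ ∪ Bᶜ)ᶜ := by simp [Set.compl_union]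
  rw [this]
  exact h.compl_mem (h.union_mem (h.compl_mem hA) (h.compl_mem hB))

lemma Popper.diff_mem (h : Popper F F' μ) {A B : Set W} (hA : A ∈ F) (hB : B ∈ F) :
    A \ B ∈ F := h.inter_mem hA (h.compl_mem hB)

lemma Popper.mono (h : Popper F F' μ) {A B U : Set W} (hA : A ∈ F) (hB : B ∈ F)
    (hU : U ∈ F') (hAB : A ⊆ B) : μ A U ≤ μ B U := by
  have hd : B = A ∪ (B \ A) := (Set.union_diff_cancel hAB).symm
  have := h.cp2 A hA (B \ A) (h.diff_mem hB hA) U hU Set.disjoint_sdiff_right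
  have hnn := h.nonneg (B \ A) (h.diff_mem hB hA) U hU
  rw [← hd] at this
  linarith

lemma Popper.partialSups_mem (h : Popper F F' μ) {s : ℕ → Set W} (hs : ∀ n, s n ∈ F)
    (n : ℕ) : partialSups s n ∈ F := by
  induction n with
  | zero => simpa using hs 0
  | succ n ih => rw [partialSups_add_one]; exact h.union_mem ih (hs (n + 1))

lemma Popper.disjointed_mem (h : Popper F F' μ) {s : ℕ → Set W} (hs : ∀ n, s n ∈ F)
    (n : ℕ) : disjointed s n ∈ F := by
  cases n with
  | zero => simpa [disjointed_zero] using hs 0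
  | succ n => rw [disjointed_add_one]; exact h.diff_mem (hs (n + 1)) (h.partialSups_mem hs n)

end Helpers

/-- In a countably additive Popper space, each `∼`-equivalence class of conditioning events
is closed under countable unions: if `V₁, V₂, …` all lie in the same `∼`-class as `V₀`,
then `⋃ᵢ Vᵢ` lies in that class as well. -/
theorem stmt3 {W : Type*} {F F' : Set (Set W)} {μ : Set W → Set W → ℝ}
    (h : Popper F F' μ) (V₀ : Set W) (hV₀ : V₀ ∈ F')
    (V : ℕ → Set W) (hV : ∀ n, V n ∈ F') (hsim : ∀ n, simRel μ (V n) V₀) :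
    (⋃ n, V n) ∈ F' ∧ simRel μ (⋃ n, V n) V₀ := by
  have hVF : ∀ n, V n ∈ F := fun n => h.subset (hV n)
  have hV₀F : V₀ ∈ F := h.subset hV₀
  have hUF : (⋃ n, V n) ∈ F := h.iUnion_mem _ hVF
  have hUF' : (⋃ n, V n) ∈ F' :=
    h.superset_closed (hV 0) (Set.subset_iUnion V 0) hUF
  set X := (⋃ n, V n) ∪ V₀ with hX
  have hXF : X ∈ F := h.union_mem hUF hV₀F
  have hXF' : X ∈ F' := h.superset_closed hUF' Set.subset_union_left hXF
  have hVnV₀F : ∀ n, V n ∪ V₀ ∈ F := fun n => h.union_mem (hVF n) hV₀F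
  have hVnV₀F' : ∀ n, V n ∪ V₀ ∈ F' := fun n =>
    h.superset_closed (hV n) Set.subset_union_left (hVnV₀F n)
  -- Lemma A: some V n has positive measure given X → V₀ has positive measure given X
  have lemA : ∀ n, 0 < μ (V n) X → 0 < μ V₀ X := by
    intro n hn
    have hsub : V n ∪ V₀ ⊆ X :=
      Set.union_subset_union_left V₀ (Set.subset_iUnion V n)
    have h3 := h.cp3 V₀ hV₀F (V n ∪ V₀) (hVnV₀F' n) X hXF'
      Set.subset_union_right hsub
    have h1 : 0 < μ V₀ (V n ∪ V₀) := by
      rw [Set.union_comm]; exact (hsim n).2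
    have h2 : 0 < μ (V n ∪ V₀) X :=
      lt_of_lt_of_le hn (h.mono (hVF n) (hVnV₀F n) hXF' Set.subset_union_left)
    rw [h3]; exact mul_pos h1 h2
  -- Lemma B: V₀ positive given X → union positive given X
  have lemB : 0 < μ V₀ X → 0 < μ (⋃ n, V n) X := by
    intro h0
    have hsub : V 0 ∪ V₀ ⊆ X :=
      Set.union_subset_union_left V₀ (Set.subset_iUnion V 0)
    have h3 := h.cp3 (V 0) (hVF 0) (V 0 ∪ V₀) (hVnV₀F' 0) X hXF'
      Set.subset_union_left hsub
    have h1 : 0 < μ (V 0) (V 0 ∪ V₀) := (hsim 0).1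
    have h2 : 0 < μ (V 0 ∪ V₀) X :=
      lt_of_lt_of_le h0 (h.mono hV₀F (hVnV₀F 0) hXF' Set.subset_union_right)
    have : 0 < μ (V 0) X := by rw [h3]; exact mul_pos h1 h2
    exact lt_of_lt_of_le this (h.mono (hVF 0) hUF hXF' (Set.subset_iUnion V 0))
  -- Lemma C: union positive given X → some V n positive given X
  have lemC : 0 < μ (⋃ n, V n) X → ∃ n, 0 < μ (V n) X := by
    intro hU
    by_contra hc
    push_neg at hc
    have hzero : ∀ n, μ (V n) X = 0 := fun n =>
      le_antisymm (hc n) (h.nonneg (V n) (hVF n) X hXF')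
    have hDmem : ∀ n, disjointed V n ∈ F := h.disjointed_mem hVF
    have hDzero : ∀ n, μ (disjointed V n) X = 0 := by
      intro n
      have hle := h.mono (hDmem n) (hVF n) hXF' (disjointed_le V n)
      have := h.nonneg (disjointed V n) (hDmem n) X hXF'
      linarith [hzero n]
    have hsum := h.countably_additive (disjointed V) hDmem
      (disjoint_disjointed V) X hXF'
    rw [show (⋃ n, disjointed V n) = ⋃ n, V n from iSup_disjointed V] at hsum
    have : HasSum (fun n => μ (disjointed V n) X) 0 := by
      convert hasSum_zero with n
      exact hDzero n
    have := hsum.unique this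
    linarith
  -- Now: μ X X = 1 splits
  have hsplit := h.cp2 (⋃ n, V n) hUF (V₀ \ ⋃ n, V n) (h.diff_mem hV₀F hUF) X hXF'
    Set.disjoint_sdiff_right
  have hXeq : (⋃ n, V n) ∪ (V₀ \ ⋃ n, V n) = X := Set.union_diff_self
  rw [hXeq, h.cp1 X hXF'] at hsplit
  have hpos : 0 < μ (⋃ n, V n) X ∨ 0 < μ (V₀ \ ⋃ n, V n) X := by
    by_contra hc
    push_neg at hc
    have h1 := h.nonneg (⋃ n, V n) hUF X hXF'
    have h2 := h.nonneg (V₀ \ ⋃ n, V n) (h.diff_mem hV₀F hUF) X hXF'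
    have e1 : μ (⋃ n, V n) X = 0 := le_antisymm hc.1 h1
    have e2 : μ (V₀ \ ⋃ n, V n) X = 0 := le_antisymm hc.2 h2
    rw [e1, e2] at hsplit; norm_num at hsplit
  have key : 0 < μ (⋃ n, V n) X ∧ 0 < μ V₀ X := by
    rcases hpos with hp | hp
    · obtain ⟨n, hn⟩ := lemC hp
      exact ⟨hp, lemA n hn⟩
    · have h0 : 0 < μ V₀ X :=
        lt_of_lt_of_le hp (h.mono (h.diff_mem hV₀F hUF) hV₀F hXF' Set.diff_subset)
      exact ⟨lemB h0, h0⟩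
  refine ⟨hUF', key.1, ?_⟩
  show 0 < μ V₀ (V₀ ∪ ⋃ n, V n)
  rw [Set.union_comm]
  exact key.2
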